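/- For every h ∈ ℍ₁, the projection Pr_{V₁} h equals the smallest concave majorant of h on [0,∞); that is, Pr_{V₁} h is concave, satisfies (Pr_{V₁} h)(t) ≥ h(t) for all t ≥ 0, and (Pr_{V₁} h)(t) ≤ c(t) for all t ≥ 0 whenever c : [0,∞) → ℝ is concave with c ≥ h pointwise. -/

import Mathlib

open MeasureTheory Set Filter
open scoped ENNReal NNReal InnerProductSpace

noncomputable section

/-- Lebesgue measure on `(0, ∞)`. -/
def muPos : Measure ℝ := volume.restrict (Set.Ioi (0:ℝ))

/-- `L²([0,∞))`, the space of derivatives.  It is isometric to the Cameron–Martin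
space `ℍ₁` of the Wiener process via `h ↦ h'`, `h(t) = ∫₀ᵗ h'(s) ds`; we identify
`ℍ₁` with this Hilbert space. -/
abbrev E : Type := Lp ℝ 2 muPos

/-- The Cameron–Martin function with derivative `φ`:  `t ↦ ∫₀ᵗ φ(s) ds`. -/
def primitive (φ : E) (t : ℝ) : ℝ := ∫ s in Set.Ioc (0:ℝ) t, φ s

/-- `V₁`: elements of `ℍ₁` whose derivative admits a non-increasing version on `[0,∞)`. -/
def V1 : Set E := {φ | ∃ ψ : ℝ → ℝ, AntitoneOn ψ (Set.Ici 0) ∧ (⇑φ) =ᵐ[muPos] ψ}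

/-- The polar cone of a set in a real inner product space. -/
def polar {H : Type*} [NormedAddCommGroup H] [InnerProductSpace ℝ H] (A : Set H) : Set H :=
  {x | ∀ y ∈ A, ⟪x, y⟫_ℝ ≤ 0}

/-- `p` is the metric projection of `x` on `A` (the nearest point of `A` to `x`). -/
def IsProj {H : Type*} [NormedAddCommGroup H] (A : Set H) (x p : H) : Prop :=
  p ∈ A ∧ ∀ y ∈ A, ‖x - p‖ ≤ ‖x - y‖

/-- `ℍ_d` as a Hilbert space: `d`-tuples of elements of `ℍ₁` (identified with their
derivatives), with inner product `⟪h,g⟫ = ∑ i, ⟪hᵢ, gᵢ⟫`. -/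
abbrev HD (d : ℕ) : Type := PiLp 2 (fun _ : Fin d => E)

/-- The additive function `t ↦ ∑ i, ∫₀^{tᵢ} φᵢ(s) ds` of `ℍ_d` associated with `Φ`. -/
def addPrim {d : ℕ} (Φ : HD d) (t : Fin d → ℝ) : ℝ := ∑ i, primitive (Φ i) (t i)

/-- `V₂ = {h = h₁ + ⋯ + h_d ∈ ℍ_d : hᵢ ∈ V₁ for all i}`. -/
def V2 {d : ℕ} : Set (HD d) := {Φ | ∀ i, Φ i ∈ V1}

lemma muPos_restrict {A : Set ℝ} (h : MeasurableSet A) (hA : A ⊆ Set.Ioi 0) :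
    muPos.restrict A = volume.restrict A := by
  rw [muPos, Measure.restrict_restrict h, Set.inter_eq_self_of_subset_left hA]

lemma integ_congr {f g : ℝ → ℝ} (hfg : f =ᵐ[muPos] g) {A : Set ℝ}
    (h : MeasurableSet A) (hA : A ⊆ Set.Ioi 0) :
    ∫ s in A, f s = ∫ s in A, g s := by
  refine integral_congr_ae ?_
  rw [← muPos_restrict h hA]
  exact ae_restrict_of_ae hfg

lemma integrableOn_E (f : E) {x y : ℝ} (hx : 0 ≤ x) :
    IntegrableOn (⇑f) (Set.Ioc x y) volume := by
  have h1 : Set.Ioc x y ⊆ Set.Ioi 0 := fun s hs => lt_of_le_of_lt hx hs.1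
  have := (Lp.memLp f).restrict (μ := muPos) (Set.Ioc x y)
  rw [muPos_restrict measurableSet_Ioc h1] at this
  exact this.integrable (by norm_num)

lemma primitive_zero (f : E) : primitive f 0 = 0 := by simp [primitive]

lemma primitive_diff (f : E) {x y : ℝ} (hx : 0 ≤ x) (hxy : x ≤ y) :
    primitive f y = primitive f x + ∫ s in Set.Ioc x y, f s := by
  rw [primitive, primitive, ← Set.Ioc_union_Ioc_eq_Ioc hx hxy,
    setIntegral_union (Set.Ioc_disjoint_Ioc_of_le le_rfl) measurableSet_Ioc
      (integrableOn_E f le_rfl) (integrableOn_E f hx)]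

section psi
variable {p : E} {ψ : ℝ → ℝ} (hψ : Antitone ψ) (hae : (⇑p) =ᵐ[muPos] ψ)

include hae in
lemma psi_sq_integrable : Integrable (fun s => ψ s ^ 2) muPos :=
  ((Lp.memLp p).integrable_sq).congr (hae.mono (by intro x hx; simp [hx]))

include hψ hae in
lemma psi_nonneg : ∀ s : ℝ, 0 < s → 0 ≤ ψ s := by
  intro s hs
  by_contra hneg
  push_neg at hneg
  have hlt := (psi_sq_integrable hae).measure_ge_lt_top (ε := ψ s ^ 2) (by nlinarith)
  have hsub : Set.Ici s ⊆ {x | ψ s ^ 2 ≤ ψ x ^ 2} := by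
    intro t ht
    have h1 : ψ t ≤ ψ s := hψ ht
    have : -ψ s ≤ -ψ t := by linarith
    calc ψ s ^ 2 = (-ψ s) ^ 2 := by ring
    _ ≤ (-ψ t) ^ 2 := by apply pow_le_pow_left₀ (by linarith) this
    _ = ψ t ^ 2 := by ring
  have hmu : muPos (Set.Ici s) = ⊤ := by
    rw [muPos, Measure.restrict_apply measurableSet_Ici]
    have : Set.Ici s ∩ Set.Ioi 0 = Set.Ici s := Set.inter_eq_self_of_subset_left
      (fun t ht => lt_of_lt_of_le hs ht)
    rw [this, Real.volume_Ici]
  exact absurd (lt_of_le_of_lt (hmu ▸ measure_mono hsub) hlt) (lt_irrefl _)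

include hψ hae in
lemma psi_bddAbove {lam : ℝ} (hlam : 0 < lam) : BddAbove {s : ℝ | 0 < s ∧ lam < ψ s} := by
  by_contra hbdd
  have hall : ∀ t : ℝ, 0 < t → lam < ψ t := by
    intro t ht
    obtain ⟨s, hs, hts⟩ := not_bddAbove_iff.mp hbdd t
    exact lt_of_lt_of_le hs.2 (hψ hts.le)
  have hlt := (psi_sq_integrable hae).measure_ge_lt_top (ε := lam ^ 2) (by positivity)
  have hsub : Set.Ioi (0:ℝ) ⊆ {x | lam ^ 2 ≤ ψ x ^ 2} := by
    intro t ht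
    have := hall t ht
    exact pow_le_pow_left₀ hlam.le this.le 2
  have hmu : muPos (Set.Ioi (0:ℝ)) = ⊤ := by
    rw [muPos, Measure.restrict_apply measurableSet_Ioi, Set.inter_self, Real.volume_Ioi]
  exact absurd (lt_of_le_of_lt (hmu ▸ measure_mono hsub) hlt) (lt_irrefl _)

end psi

section conc
variable {p : E} {ψ : ℝ → ℝ} (hψ : Antitone ψ) (hae : (⇑p) =ᵐ[muPos] ψ)

include hae in
lemma psi_integrableOn {x y : ℝ} (hx : 0 ≤ x) : IntegrableOn ψ (Set.Ioc x y) volume := by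
  refine (integrableOn_E p hx).congr ?_
  have h1 : Set.Ioc x y ⊆ Set.Ioi 0 := fun s hs => lt_of_le_of_lt hx hs.1
  rw [← muPos_restrict measurableSet_Ioc h1]
  exact ae_restrict_of_ae hae

include hae in
lemma primitive_psi {x y : ℝ} (hx : 0 ≤ x) (hxy : x ≤ y) :
    primitive p y = primitive p x + ∫ s in Set.Ioc x y, ψ s := by
  rw [primitive_diff p hx hxy,
    integ_congr hae measurableSet_Ioc (fun s hs => lt_of_le_of_lt hx hs.1)]

include hψ hae in
lemma psi_int_ge {x z : ℝ} (hx : 0 ≤ x) (hxz : x ≤ z) :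
    (z - x) * ψ z ≤ ∫ s in Set.Ioc x z, ψ s := by
  have : ∫ s in Set.Ioc x z, ψ z = (z - x) * ψ z := by
    rw [setIntegral_const, Real.volume_real_Ioc_of_le (by linarith), smul_eq_mul]
  rw [← this]
  refine setIntegral_mono_on (integrableOn_const ?_) (psi_integrableOn hae hx)
    measurableSet_Ioc (fun s hs => hψ hs.2)
  rw [Real.volume_Ioc]; exact ENNReal.ofReal_ne_top

include hψ hae in
lemma psi_int_le {z y : ℝ} (hz : 0 ≤ z) (hzy : z ≤ y) :
    ∫ s in Set.Ioc z y, ψ s ≤ (y - z) * ψ z := by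
  have : ∫ s in Set.Ioc z y, ψ z = (y - z) * ψ z := by
    rw [setIntegral_const, Real.volume_real_Ioc_of_le (by linarith), smul_eq_mul]
  rw [← this]
  refine setIntegral_mono_on (psi_integrableOn hae hz) (integrableOn_const ?_)
    measurableSet_Ioc (fun s hs => hψ hs.1.le)
  rw [Real.volume_Ioc]; exact ENNReal.ofReal_ne_top

include hψ hae in
lemma primitive_concave_aux {x y a b : ℝ} (hx : 0 ≤ x) (hxy : x ≤ y)
    (ha : 0 ≤ a) (hb : 0 ≤ b) (hab : a + b = 1) :
    a * primitive p x + b * primitive p y ≤ primitive p (a * x + b * y) := by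
  set z := a * x + b * y with hzdef
  have hxz : x ≤ z := by nlinarith
  have hzy : z ≤ y := by nlinarith
  have hz : 0 ≤ z := le_trans hx hxz
  have h1 := psi_int_ge hψ hae hx hxz
  have h2 := psi_int_le hψ hae hz hzy
  have e1 := primitive_psi hae hx hxz
  have e2 := primitive_psi hae hz hzy
  have hA : a = 1 - b := by linarith
  have k1 := mul_le_mul_of_nonneg_left h1 ha
  have k2 := mul_le_mul_of_nonneg_left h2 hb
  have id1 : a * ((z - x) * ψ z) = b * ((y - z) * ψ z) := by rw [hzdef, hA]; ring
  have e1' : a * primitive p z = a * primitive p x + a * ∫ s in Set.Ioc x z, ψ s := by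
    rw [e1]; ring
  have e2' : b * primitive p y = b * primitive p z + b * ∫ s in Set.Ioc z y, ψ s := by
    rw [e2]; ring
  have hsum : a * primitive p z + b * primitive p z = primitive p z := by rw [hA]; ring
  linarith [k1, k2, e1', e2', id1, hsum]

include hψ hae in
lemma primitive_concave : ConcaveOn ℝ (Set.Ici 0) (primitive p) := by
  constructor
  · exact convex_Ici 0
  · intro x hx y hy a b ha hb hab
    simp only [smul_eq_mul]
    rcases le_total x y with h | h
    · exact primitive_concave_aux hψ hae hx h ha hb hab
    · have := primitive_concave_aux hψ hae hy h hb ha (by linarith)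
      calc a * primitive p x + b * primitive p y
          = b * primitive p y + a * primitive p x := by ring
        _ ≤ primitive p (b * y + a * x) := this
        _ = primitive p (a * x + b * y) := by rw [add_comm]

end conc

lemma mem_Ioi_ae : ∀ᵐ s ∂muPos, s ∈ Set.Ioi (0:ℝ) := ae_restrict_mem measurableSet_Ioi

lemma V1_global {f : E} (hf : f ∈ V1) : ∃ ψ : ℝ → ℝ, Antitone ψ ∧ (⇑f) =ᵐ[muPos] ψ := by
  obtain ⟨ψ₀, hanti, hae⟩ := hf
  refine ⟨fun s => ψ₀ (max s 0), ?_, ?_⟩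
  · intro s t hst
    exact hanti (Set.mem_Ici.mpr (le_max_right s 0)) (Set.mem_Ici.mpr (le_max_right t 0))
      (max_le_max hst le_rfl)
  · refine hae.trans (mem_Ioi_ae.mono fun s hs => ?_)
    simp only [max_eq_left (le_of_lt (Set.mem_Ioi.mp hs))]

lemma V1_add {f g : E} (hf : f ∈ V1) (hg : g ∈ V1) : f + g ∈ V1 := by
  obtain ⟨ψf, haf, hef⟩ := hf
  obtain ⟨ψg, hag, heg⟩ := hg
  exact ⟨ψf + ψg, haf.add hag, (Lp.coeFn_add f g).trans
    ((hef.add heg).mono fun s hs => by simpa using hs)⟩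

lemma V1_smul {c : ℝ} (hc : 0 ≤ c) {f : E} (hf : f ∈ V1) : c • f ∈ V1 := by
  obtain ⟨ψf, haf, hef⟩ := hf
  refine ⟨fun s => c * ψf s, fun x hx y hy hxy => ?_, (Lp.coeFn_smul c f).trans
    (hef.mono fun s hs => by simp [hs])⟩
  exact mul_le_mul_of_nonneg_left (haf hx hy hxy) hc

lemma V1_zero : (0 : E) ∈ V1 :=
  ⟨fun _ => 0, fun _ _ _ _ _ => le_rfl, Lp.coeFn_zero ℝ 2 muPos⟩

lemma V1_convex : Convex ℝ V1 := fun f hf g hg a b ha hb _ =>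
  V1_add (V1_smul ha hf) (V1_smul hb hg)

section proj
variable {φ p : E} (hp : IsProj V1 φ p)

set_option maxHeartbeats 1000000 in
include hp in
lemma proj_VI : ∀ y ∈ V1, ⟪φ - p, y - p⟫_ℝ ≤ 0 := by
  have h1 : ‖φ - p‖ = ⨅ w : V1, ‖φ - (w : E)‖ := by
    haveI : Nonempty V1 := ⟨⟨p, hp.1⟩⟩
    apply le_antisymm
    · exact le_ciInf fun w => hp.2 w w.2
    · exact ciInf_le ⟨0, by rintro x ⟨w, rfl⟩; exact norm_nonneg _⟩ (⟨p, hp.1⟩ : V1)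
  exact (norm_eq_iInf_iff_real_inner_le_zero V1_convex hp.1).mp h1

include hp in
lemma proj_inner_nonpos : ∀ y ∈ V1, ⟪φ - p, y⟫_ℝ ≤ 0 := by
  intro y hy
  have := proj_VI hp (y + p) (V1_add hy hp.1)
  simpa using this

include hp in
lemma proj_inner_self : ⟪φ - p, p⟫_ℝ = 0 := by
  refine le_antisymm (proj_inner_nonpos hp p hp.1) ?_
  have := proj_VI hp 0 V1_zero
  rw [zero_sub, inner_neg_right] at this
  linarith

end proj

lemma Ioc_subset_Ioi (t : ℝ) : Set.Ioc (0:ℝ) t ⊆ Set.Ioi 0 := fun s hs => hs.1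

lemma muPos_Ioc (t : ℝ) : muPos (Set.Ioc (0:ℝ) t) = ENNReal.ofReal t := by
  rw [muPos, Measure.restrict_apply measurableSet_Ioc,
    Set.inter_eq_self_of_subset_left (Ioc_subset_Ioi t), Real.volume_Ioc, sub_zero]

def indE (t : ℝ) : E :=
  indicatorConstLp 2 (measurableSet_Ioc : MeasurableSet (Set.Ioc (0:ℝ) t))
    (by rw [muPos_Ioc t]; exact ENNReal.ofReal_ne_top) (1:ℝ)

lemma indE_mem (t : ℝ) : indE t ∈ V1 := by
  refine ⟨Set.indicator (Set.Icc 0 t) (fun _ => 1), ?_, ?_⟩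
  · intro x hx y hy hxy
    by_cases hyt : y ∈ Set.Icc (0:ℝ) t
    · have hxt : x ∈ Set.Icc (0:ℝ) t := ⟨hx, le_trans hxy hyt.2⟩
      simp [Set.indicator_of_mem hyt, Set.indicator_of_mem hxt]
    · rw [Set.indicator_of_notMem hyt]
      exact Set.indicator_nonneg (fun _ _ => zero_le_one) x
  · refine (indicatorConstLp_coeFn (p := 2)).trans (mem_Ioi_ae.mono fun s hs => ?_)
    have : s ∈ Set.Ioc 0 t ↔ s ∈ Set.Icc (0:ℝ) t := by
      constructor
      · exact fun h => ⟨h.1.le, h.2⟩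
      · exact fun h => ⟨hs, h.2⟩
    by_cases h : s ∈ Set.Ioc (0:ℝ) t
    · rw [Set.indicator_of_mem h, Set.indicator_of_mem (this.mp h)]
    · rw [Set.indicator_of_notMem h, Set.indicator_of_notMem (fun hc => h (this.mpr hc))]

lemma inner_indE (f : E) (t : ℝ) : ⟪indE t, f⟫_ℝ = primitive f t := by
  rw [indE, L2.inner_indicatorConstLp_eq_setIntegral_inner]
  rw [primitive, ← muPos_restrict measurableSet_Ioc (Ioc_subset_Ioi t)]
  congr 1
  ext x
  simp [RCLike.inner_apply]

lemma primitive_sub (f g : E) (t : ℝ) :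
    primitive (f - g) t = primitive f t - primitive g t := by
  by_cases ht : 0 < t
  · have h1 : ∫ s in Set.Ioc (0:ℝ) t, (f - g) s = ∫ s in Set.Ioc (0:ℝ) t, (f s - g s) :=
      integ_congr ((Lp.coeFn_sub f g).mono fun s hs => by simpa using hs)
        measurableSet_Ioc (Ioc_subset_Ioi t)
    rw [primitive, h1, integral_sub (integrableOn_E f le_rfl) (integrableOn_E g le_rfl)]
    rfl
  · have : Set.Ioc (0:ℝ) t = ∅ := Set.Ioc_eq_empty (fun h => ht h)
    simp [primitive, this]

lemma primitive_le {φ p : E} (hp : IsProj V1 φ p) :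
    ∀ t : ℝ, 0 ≤ t → primitive φ t ≤ primitive p t := by
  intro t ht
  rcases eq_or_lt_of_le ht with rfl | ht
  · rw [primitive_zero, primitive_zero]
  · have h := proj_inner_nonpos hp (indE t) (indE_mem t)
    rw [real_inner_comm, inner_indE, primitive_sub] at h
    linarith

lemma real_inner_eq' (a b : ℝ) : ⟪a, b⟫_ℝ = a * b := by
  simp [RCLike.inner_apply, mul_comm]

section layer
variable {φ p : E} (hp : IsProj V1 φ p) {ψ : ℝ → ℝ} (hψ : Antitone ψ)
  (hae : (⇑p) =ᵐ[muPos] ψ) {g : ℝ → ℝ} (hgm : StronglyMeasurable g)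
  (hg : (⇑(φ - p)) =ᵐ[muPos] g)

include hp hae hg in
lemma comp_zero : ∫ s, g s * ψ s ∂muPos = 0 := by
  have h0 : ⟪φ - p, p⟫_ℝ = 0 := proj_inner_self hp
  rw [L2.inner_def] at h0
  rw [← h0]
  refine integral_congr_ae ?_
  filter_upwards [hae, hg] with a h1 h2
  rw [real_inner_eq', h1, h2]

include hae hg in
lemma abs_mul_integrable : Integrable (fun s => |g s| * ψ s) muPos := by
  have h := L2.integrable_inner (𝕜 := ℝ) |φ - p| p
  refine h.congr ?_
  filter_upwards [hae, hg, Lp.coeFn_abs (φ - p)] with a h1 h2 h3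
  rw [real_inner_eq', h1, h3, h2]

end layer

/-- the level point: `sup {s > 0 | ψ s > lam}` (or `0`). -/
def Tlev (ψ : ℝ → ℝ) (lam : ℝ) : ℝ := sSup (insert 0 {s : ℝ | 0 < s ∧ lam < ψ s})

section Tfacts
variable {p : E} {ψ : ℝ → ℝ} (hψ : Antitone ψ) (hae : (⇑p) =ᵐ[muPos] ψ) {lam : ℝ}
  (hlam : 0 < lam)

include hψ hae hlam

lemma T_bdd : BddAbove (insert 0 {s : ℝ | 0 < s ∧ lam < ψ s}) :=
  (psi_bddAbove hψ hae hlam).insert 0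

lemma T_nonneg : 0 ≤ Tlev ψ lam := le_csSup (T_bdd hψ hae hlam) (Set.mem_insert 0 _)

lemma T_ge {s : ℝ} (h0 : 0 < s) (h1 : lam < ψ s) : s ≤ Tlev ψ lam :=
  le_csSup (T_bdd hψ hae hlam) (Set.mem_insert_of_mem _ ⟨h0, h1⟩)

lemma T_lt {s : ℝ} (h0 : 0 < s) (h1 : s < Tlev ψ lam) : lam < ψ s := by
  obtain ⟨x, hx, hsx⟩ := exists_lt_of_lt_csSup ⟨0, Set.mem_insert 0 _⟩ h1
  rcases hx with rfl | hx
  · exact absurd (h0.trans hsx) (lt_irrefl 0)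
  · exact lt_of_lt_of_le hx.2 (hψ hsx.le)

lemma T_set_ae : {s : ℝ | 0 < s ∧ lam < ψ s} =ᵐ[volume] Set.Ioc 0 (Tlev ψ lam) := by
  rw [MeasureTheory.ae_eq_set]
  constructor
  · refine measure_mono_null (fun s hs => ?_) (measure_empty)
    exact absurd ⟨hs.1.1, T_ge hψ hae hlam hs.1.1 hs.1.2⟩ hs.2
  · refine measure_mono_null (fun s hs => ?_) (Real.volume_singleton (a := Tlev ψ lam))
    rcases eq_or_lt_of_le hs.1.2 with h | h
    · exact h
    · exact absurd ⟨hs.1.1, T_lt hψ hae hlam hs.1.1 h⟩ hs.2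

end Tfacts

instance : SigmaFinite muPos := by unfold muPos; infer_instance

section contact
variable {φ p : E} (hp : IsProj V1 φ p) {ψ : ℝ → ℝ} (hψ : Antitone ψ)
  (hae : (⇑p) =ᵐ[muPos] ψ) {g : ℝ → ℝ} (hgm : StronglyMeasurable g)
  (hg : (⇑(φ - p)) =ᵐ[muPos] g)

include hp hψ hae hgm hg in
lemma contact_ae : ∀ᵐ lam ∂(volume : Measure ℝ), 0 < lam →
    primitive p (Tlev ψ lam) = primitive φ (Tlev ψ lam) := by
  classical
  set A : Set (ℝ × ℝ) := {z : ℝ × ℝ | 0 < z.2 ∧ z.2 < ψ z.1} with hA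
  have hAmeas : MeasurableSet A := by
    have h1 : MeasurableSet {z : ℝ × ℝ | 0 < z.2} := measurable_snd measurableSet_Ioi
    have h2 : MeasurableSet {z : ℝ × ℝ | z.2 < ψ z.1} :=
      measurableSet_lt measurable_snd (hψ.measurable.comp measurable_fst)
    have : A = {z : ℝ × ℝ | 0 < z.2} ∩ {z : ℝ × ℝ | z.2 < ψ z.1} := by
      ext z; simp [hA, Set.mem_setOf_eq, Set.mem_inter_iff]
    rw [this]; exact h1.inter h2
  set H : ℝ × ℝ → ℝ := A.indicator (fun z => g z.1) with hH
  have hHsm : StronglyMeasurable H := (hgm.comp_measurable measurable_fst).indicator hAmeas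
  have hslice : ∀ s : ℝ, (fun lam => H (s, lam)) = (Set.Ioo 0 (ψ s)).indicator (fun _ => g s) := by
    intro s; funext lam
    simp only [hH, Set.indicator_apply, hA, Set.mem_setOf_eq, Set.mem_Ioo]
  have hslice2 : ∀ lam : ℝ, 0 < lam →
      (fun s => H (s, lam)) = Set.indicator {s : ℝ | lam < ψ s} g := by
    intro lam hlam; funext s
    simp only [hH, Set.indicator_apply, hA, Set.mem_setOf_eq]
    by_cases h : lam < ψ s
    · rw [if_pos ⟨hlam, h⟩, if_pos h]
    · rw [if_neg (fun hc => h hc.2), if_neg h]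
  have hint : Integrable H (muPos.prod volume) := by
    rw [integrable_prod_iff hHsm.aestronglyMeasurable]
    constructor
    · refine Eventually.of_forall fun s => ?_
      rw [show (fun y => H (s, y)) = (Set.Ioo 0 (ψ s)).indicator (fun _ => g s) from hslice s]
      rw [integrable_indicator_iff measurableSet_Ioo]
      exact integrableOn_const measure_Ioo_lt_top.ne
    · refine (abs_mul_integrable hae hg).congr ?_
      filter_upwards [mem_Ioi_ae] with s hs
      have hnorm : (fun lam => ‖H (s, lam)‖) = (Set.Ioo 0 (ψ s)).indicator (fun _ => ‖g s‖) := by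
        funext lam
        rw [congrFun (hslice s) lam]
        by_cases h : lam ∈ Set.Ioo 0 (ψ s)
        · rw [Set.indicator_of_mem h, Set.indicator_of_mem h]
        · rw [Set.indicator_of_notMem h, Set.indicator_of_notMem h, norm_zero]
      rw [hnorm, integral_indicator_const _ measurableSet_Ioo, Real.volume_real_Ioo_of_le (psi_nonneg hψ hae s hs), sub_zero,
        smul_eq_mul, Real.norm_eq_abs]
      ring
  have hswap := integral_integral_swap (f := fun s lam => H (s, lam))
    (μ := muPos) (ν := (volume : Measure ℝ)) hint
  have hL : ∫ s, (∫ lam, H (s, lam)) ∂muPos = 0 := by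
    rw [← comp_zero hp hae hg]
    refine integral_congr_ae ?_
    filter_upwards [mem_Ioi_ae] with s hs
    rw [hslice s, integral_indicator_const _ measurableSet_Ioo, Real.volume_real_Ioo_of_le (psi_nonneg hψ hae s hs), sub_zero,
      smul_eq_mul]
    ring
  have hW : ∀ lam : ℝ, 0 < lam → ∫ s, H (s, lam) ∂muPos
      = primitive φ (Tlev ψ lam) - primitive p (Tlev ψ lam) := by
    intro lam hlam
    have hBmeas : MeasurableSet {s : ℝ | lam < ψ s} :=
      measurableSet_lt measurable_const hψ.measurable
    rw [hslice2 lam hlam, integral_indicator hBmeas, muPos, Measure.restrict_restrict hBmeas]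
    have hseteq : ({s : ℝ | lam < ψ s} ∩ Set.Ioi 0 : Set ℝ) = {s : ℝ | 0 < s ∧ lam < ψ s} := by
      ext x; simp [Set.mem_setOf_eq, and_comm]
    rw [hseteq, setIntegral_congr_set (T_set_ae hψ hae hlam),
      ← integ_congr hg measurableSet_Ioc (Ioc_subset_Ioi _), ← primitive, primitive_sub]
  have hWint : Integrable (fun lam => ∫ s, H (s, lam) ∂muPos) (volume : Measure ℝ) :=
    hint.integral_prod_right
  have hWle : ∀ lam : ℝ, ∫ s, H (s, lam) ∂muPos ≤ 0 := by
    intro lam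
    by_cases hlam : 0 < lam
    · rw [hW lam hlam]
      linarith [primitive_le hp _ (T_nonneg hψ hae hlam)]
    · have hz : (fun s => H (s, lam)) = fun _ => (0:ℝ) := by
        funext s
        simp only [hH, Set.indicator_apply, hA, Set.mem_setOf_eq]
        rw [if_neg (fun hc => hlam hc.1)]
      rw [hz]; simp
  have hzero : ∫ lam, (∫ s, H (s, lam) ∂muPos) = 0 := by rw [← hswap, hL]
  have haez : (fun lam => -∫ s, H (s, lam) ∂muPos) =ᵐ[(volume : Measure ℝ)] 0 := by
    refine (integral_eq_zero_iff_of_nonneg_ae ?_ hWint.neg).mp ?_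
    · exact Eventually.of_forall fun lam => by simpa using hWle lam
    · simp only [Pi.neg_apply]
      rw [integral_neg, hzero, neg_zero]
  filter_upwards [haez] with lam h0 hpos
  have hWe := hW lam hpos
  have hWz : ∫ s, H (s, lam) ∂muPos = 0 := by
    have : -∫ s, H (s, lam) ∂muPos = 0 := h0
    linarith
  rw [hWz] at hWe
  linarith

end contact

lemma primitive_abs_le (f : E) {t : ℝ} (ht : 0 ≤ t) :
    |primitive f t| ≤ ‖f‖ * t ^ ((1:ℝ)/2) := by
  rw [← inner_indE f t]
  have h1 := abs_real_inner_le_norm (indE t) f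
  have h2 : ‖indE t‖ = t ^ ((1:ℝ)/2) := by
    rw [indE, norm_indicatorConstLp (by norm_num) (by norm_num), measureReal_def, muPos_Ioc,
      ENNReal.toReal_ofReal ht, norm_one, one_mul]
    norm_num
  rw [h2] at h1
  linarith [h1, mul_comm (t ^ ((1:ℝ)/2)) ‖f‖]

lemma concave_majorant_mono {c : ℝ → ℝ} (hc : ConcaveOn ℝ (Set.Ici 0) c) {K : ℝ}
    (hK : 0 ≤ K) (hbd : ∀ t : ℝ, 0 ≤ t → -(K * t ^ ((1:ℝ)/2)) ≤ c t) :
    MonotoneOn c (Set.Ici 0) := by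
  rintro r (hr : (0:ℝ) ≤ r) s (hs : (0:ℝ) ≤ s) hrs
  rcases eq_or_lt_of_le hrs with rfl | hrs'
  · exact le_rfl
  by_contra hcon
  push_neg at hcon
  set D : ℝ := c r - c s with hD
  have hDpos : 0 < D := by simp [hD]; linarith
  -- chord bound: for t ≥ s, (s - r) * c t ≤ (s - r) * c r - (t - r) * D
  have key : ∀ t : ℝ, s ≤ t → (s - r) * c t ≤ (s - r) * c r - (t - r) * D := by
    intro t hst
    rcases eq_or_lt_of_le hst with rfl | hst'
    · have h : (s - r) * c r - (s - r) * D = (s - r) * c s := by rw [hD]; ring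
      linarith
    have hrt : 0 < t - r := by linarith
    have ha : (0:ℝ) ≤ (t - s)/(t - r) := by apply div_nonneg <;> linarith
    have hb : (0:ℝ) ≤ (s - r)/(t - r) := by apply div_nonneg <;> linarith
    have hab : (t - s)/(t - r) + (s - r)/(t - r) = 1 := by
      field_simp; ring
    have hpt : (t - s)/(t - r) * r + (s - r)/(t - r) * t = s := by
      field_simp; ring
    have hconc := hc.2 (Set.mem_Ici.mpr hr) (Set.mem_Ici.mpr (by linarith : (0:ℝ) ≤ t))
      ha hb hab
    simp only [smul_eq_mul] at hconc
    rw [hpt] at hconc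
    have h3 := mul_le_mul_of_nonneg_left hconc hrt.le
    have h4 : (t - r) * ((t - s)/(t - r) * c r + (s - r)/(t - r) * c t)
        = (t - s) * c r + (s - r) * c t := by
      field_simp
    rw [h4] at h3
    rw [hD]
    nlinarith [h3]
  -- tends to -infty
  have hBneg : Tendsto (fun t : ℝ => ((s - r) * c r + r * D)
      + t ^ ((1:ℝ)/2) * ((s - r) * K + (-D) * t ^ ((1:ℝ)/2))) atTop atBot := by
    apply tendsto_atBot_add_const_left
    apply Tendsto.atTop_mul_atBot₀ (tendsto_rpow_atTop (by norm_num))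
    apply tendsto_atBot_add_const_left
    exact (tendsto_const_mul_atBot_of_neg (by linarith)).mpr (tendsto_rpow_atTop (by norm_num))
  obtain ⟨t, hBt, hts⟩ :=
    ((hBneg.eventually (eventually_lt_atBot 0)).and (eventually_ge_atTop (max s 1))).exists
  have hts' : s ≤ t := le_trans (le_max_left s 1) hts
  have ht1 : (1:ℝ) ≤ t := le_trans (le_max_right s 1) hts
  have ht0 : (0:ℝ) < t := by linarith
  have hhalf : t ^ ((1:ℝ)/2) * t ^ ((1:ℝ)/2) = t := by
    rw [← Real.rpow_add ht0]
    norm_num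
  have hck := key t hts'
  have hcb := hbd t ht0.le
  have h5 := mul_le_mul_of_nonneg_left hcb (by linarith : (0:ℝ) ≤ s - r)
  nlinarith [hBt, hck, h5, hhalf]

lemma exists_good {P : ℝ → Prop} (hcont : ∀ᵐ lam ∂(volume : Measure ℝ), 0 < lam → P lam)
    {l u : ℝ} (hl : 0 ≤ l) (hlu : l < u) : ∃ lam, l < lam ∧ lam ≤ u ∧ P lam := by
  have hN : volume {lam : ℝ | ¬(0 < lam → P lam)} = 0 := ae_iff.mp hcont
  by_contra hcon
  push_neg at hcon
  have hsub : Set.Ioc l u ⊆ {lam : ℝ | ¬(0 < lam → P lam)} := by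
    intro x hx
    exact fun himp => hcon x hx.1 hx.2 (himp (lt_of_le_of_lt hl hx.1))
  have := measure_mono_null hsub hN
  rw [Real.volume_Ioc] at this
  rw [ENNReal.ofReal_eq_zero] at this
  linarith

section bounds
variable {p : E} {ψ : ℝ → ℝ} (hae : (⇑p) =ᵐ[muPos] ψ)

include hae in
lemma psi_int_le_of {x y M : ℝ} (hx : 0 ≤ x) (hxy : x ≤ y)
    (hM : ∀ s ∈ Set.Ioc x y, ψ s ≤ M) : ∫ s in Set.Ioc x y, ψ s ≤ (y - x) * M := by
  have h : ∫ s in Set.Ioc x y, M = (y - x) * M := by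
    rw [setIntegral_const, Real.volume_real_Ioc_of_le (by linarith), smul_eq_mul]
  rw [← h]
  refine setIntegral_mono_on (psi_integrableOn hae hx) (integrableOn_const ?_)
    measurableSet_Ioc hM
  rw [Real.volume_Ioc]; exact ENNReal.ofReal_ne_top

include hae in
lemma psi_int_ge_of {x y M : ℝ} (hx : 0 ≤ x) (hxy : x ≤ y)
    (hM : ∀ s ∈ Set.Ioo x y, M ≤ ψ s) : (y - x) * M ≤ ∫ s in Set.Ioc x y, ψ s := by
  rw [setIntegral_congr_set (Ioo_ae_eq_Ioc (a := x) (b := y)).symm]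
  have h : ∫ s in Set.Ioo x y, M = (y - x) * M := by
    rw [setIntegral_const, Real.volume_real_Ioo_of_le (by linarith), smul_eq_mul]
  rw [← h]
  have hio : IntegrableOn ψ (Set.Ioo x y) volume :=
    (psi_integrableOn hae hx (y := y)).mono_set Set.Ioo_subset_Ioc_self
  refine setIntegral_mono_on (integrableOn_const ?_) hio measurableSet_Ioo hM
  rw [Real.volume_Ioo]; exact ENNReal.ofReal_ne_top

end bounds

lemma chord_ineq {c : ℝ → ℝ} (hc : ConcaveOn ℝ (Set.Ici 0) c) {a t b : ℝ}
    (ha : 0 ≤ a) (hat : a < t) (htb : t < b) :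
    (b - t) * c a + (t - a) * c b ≤ (b - a) * c t := by
  have hab : 0 < b - a := by linarith
  have hθ1 : (0:ℝ) ≤ (b - t)/(b - a) := by apply div_nonneg <;> linarith
  have hθ2 : (0:ℝ) ≤ (t - a)/(b - a) := by apply div_nonneg <;> linarith
  have hθs : (b - t)/(b - a) + (t - a)/(b - a) = 1 := by field_simp; ring
  have hpt : (b - t)/(b - a) * a + (t - a)/(b - a) * b = t := by field_simp; ring
  have hconc := hc.2 (Set.mem_Ici.mpr ha) (Set.mem_Ici.mpr (by linarith : (0:ℝ) ≤ b))
    hθ1 hθ2 hθs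
  simp only [smul_eq_mul] at hconc
  rw [hpt] at hconc
  have h3 := mul_le_mul_of_nonneg_left hconc hab.le
  have h4 : (b - a) * ((b - t)/(b - a) * c a + (t - a)/(b - a) * c b)
      = (b - t) * c a + (t - a) * c b := by field_simp
  rw [h4] at h3
  exact h3


/-- for every `h ∈ ℍ₁`, the projection `Pr_{V₁} h` is the smallest
concave majorant of `h` on `[0,∞)`: it is concave on `[0,∞)`, it majorizes `h`,
and it is below every concave majorant of `h`. -/
theorem proj_V1_is_smallest_concave_majorant (φ p : E) (hp : IsProj V1 φ p) :
    ConcaveOn ℝ (Set.Ici 0) (primitive p) ∧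
    (∀ t : ℝ, 0 ≤ t → primitive φ t ≤ primitive p t) ∧
    (∀ c : ℝ → ℝ, ConcaveOn ℝ (Set.Ici 0) c →
      (∀ t : ℝ, 0 ≤ t → primitive φ t ≤ c t) →
      ∀ t : ℝ, 0 ≤ t → primitive p t ≤ c t) := by
  obtain ⟨ψ, hψ, hae⟩ := V1_global hp.1
  obtain ⟨g, hgm, hg⟩ := Lp.aestronglyMeasurable (φ - p)
  have hcont := contact_ae hp hψ hae hgm hg
  refine ⟨primitive_concave hψ hae, primitive_le hp, ?_⟩
  intro c hc hcm t₀ ht₀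
  have hmono : MonotoneOn c (Set.Ici 0) := by
    refine concave_majorant_mono hc (norm_nonneg φ) (fun t ht => ?_)
    have h1 := primitive_abs_le φ (t := t) ht
    have h2 := hcm t ht
    have h3 := neg_abs_le (primitive φ t)
    linarith
  rcases eq_or_lt_of_le ht₀ with rfl | ht₀p
  · rw [primitive_zero]
    have h := hcm 0 le_rfl
    rw [primitive_zero] at h
    exact h
  refine le_of_forall_pos_le_add fun δ hδ => ?_
  set ε := δ / (2 * t₀ + 1) with hε
  have hεpos : 0 < ε := by rw [hε]; positivity
  set lam₀ := ψ t₀ with hlam₀def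
  have hlam₀ : 0 ≤ lam₀ := psi_nonneg hψ hae t₀ ht₀p
  obtain ⟨lam, hl1, hl2, hlC⟩ := exists_good hcont (l := lam₀) (u := lam₀ + ε)
    hlam₀ (by linarith)
  have hlampos : 0 < lam := lt_of_le_of_lt hlam₀ hl1
  set a := Tlev ψ lam with hadef
  have ha0 : 0 ≤ a := T_nonneg hψ hae hlampos
  have hat : a ≤ t₀ := by
    refine csSup_le (Set.insert_nonempty _ _) ?_
    rintro x (rfl | ⟨hx0, hxl⟩)
    · exact ht₀
    · by_contra hgt
      push_neg at hgt
      have hx := hψ (le_of_lt hgt)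
      rw [← hlam₀def] at hx
      linarith
  have hconta : primitive p a = primitive φ a := hlC
  have hFa : primitive p t₀ ≤ primitive p a + (t₀ - a) * lam := by
    rw [primitive_psi hae ha0 hat]
    have hb := psi_int_le_of hae (M := lam) ha0 hat (fun s hs => ?_)
    · linarith
    · by_contra h
      push_neg at h
      have := T_ge hψ hae hlampos (lt_of_le_of_lt ha0 hs.1) h
      rw [← hadef] at this
      linarith [hs.1]
  have hca : c a ≤ c t₀ := hmono (Set.mem_Ici.mpr ha0) (Set.mem_Ici.mpr ht₀) hat
  have hGa : primitive φ a ≤ c a := hcm a ha0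
  have h2t : (0:ℝ) < 2 * t₀ + 1 := by linarith
  have htε : t₀ * (2 * ε) ≤ δ := by
    have he : t₀ * (2 * ε) = (2 * t₀ * δ) / (2 * t₀ + 1) := by rw [hε]; ring
    rw [he, div_le_iff₀ h2t]
    nlinarith
  rcases eq_or_lt_of_le hlam₀ with hlam₀0 | hlam₀pos
  · -- ψ t₀ = 0
    have hle : (t₀ - a) * lam ≤ t₀ * ε :=
      mul_le_mul (by linarith) (by linarith) hlampos.le ht₀
    have he2 : t₀ * (2 * ε) = 2 * (t₀ * ε) := by ring
    have he3 : 0 ≤ t₀ * ε := mul_nonneg ht₀ hεpos.le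
    linarith
  · -- ψ t₀ > 0
    set l := max (lam₀ - ε) (lam₀ / 2) with hldef
    have hl0 : 0 ≤ l := le_trans (by linarith) (le_max_right _ _)
    have hllt : l < lam₀ := max_lt (by linarith) (by linarith)
    obtain ⟨lam', hl1', hl2', hlC'⟩ := exists_good hcont (l := l) (u := (l + lam₀)/2)
      hl0 (by linarith)
    have hlam'pos : 0 < lam' := lt_of_le_of_lt hl0 hl1'
    have hlam'lt : lam' < lam₀ := by linarith
    have hlam'ge : lam₀ - ε ≤ lam' := le_trans (le_max_left _ _) hl1'.le
    set b := Tlev ψ lam' with hbdef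
    have htb : t₀ ≤ b := T_ge hψ hae hlam'pos ht₀p (hlam₀def ▸ hlam'lt)
    have hcontb : primitive p b = primitive φ b := hlC'
    have hGb : primitive φ b ≤ c b := hcm b (le_trans ht₀ htb)
    have hFb : primitive p t₀ + (b - t₀) * lam' ≤ primitive p b := by
      rw [primitive_psi hae ht₀ htb]
      have hb2 := psi_int_ge_of hae ht₀ htb (fun s hs =>
        (T_lt hψ hae hlam'pos (lt_trans ht₀p hs.1) (hbdef ▸ hs.2)).le)
      linarith
    rcases eq_or_lt_of_le htb with hbt | hbt
    · have hcb : c b = c t₀ := by rw [hbt]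
      rw [← hbt] at hcontb hGb
      linarith
    rcases eq_or_lt_of_le hat with hta | hta
    · rw [hta] at hconta hGa hca
      rw [hta, sub_self, zero_mul, add_zero] at hFa
      linarith
    · have hch := chord_ineq hc ha0 hta hbt
      have hk1 := mul_le_mul_of_nonneg_left
        (show primitive p t₀ - (t₀ - a) * lam ≤ c a by linarith)
        (by linarith : (0:ℝ) ≤ b - t₀)
      have hk2 := mul_le_mul_of_nonneg_left
        (show primitive p t₀ + (b - t₀) * lam' ≤ c b by linarith)
        (by linarith : (0:ℝ) ≤ t₀ - a)
      have m1 : (0:ℝ) ≤ b - t₀ := by linarith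
      have m2 : (0:ℝ) ≤ t₀ - a := by linarith
      have e1 : lam - lam' ≤ 2 * ε := by linarith
      have h1 := mul_le_mul_of_nonneg_left e1 (mul_nonneg m1 m2)
      have h2 : (b - t₀) * (t₀ - a) ≤ (b - a) * t₀ :=
        mul_le_mul (by linarith) (by linarith) m2 (by linarith)
      have h3 := mul_le_mul_of_nonneg_right h2 (by linarith : (0:ℝ) ≤ 2 * ε)
      have h4 := mul_le_mul_of_nonneg_left htε (by linarith : (0:ℝ) ≤ b - a)
      have hba : (0:ℝ) < b - a := by linarith
      have hfinal : (b - a) * primitive p t₀ ≤ (b - a) * (c t₀ + δ) := by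
        linarith [hch, hk1, hk2, h1, h3, h4]
      exact (mul_le_mul_iff_right₀ hba).mp hfinal
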